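/- arXiv:hep-th/9406113 — 5 statements merged into one kernel-verified Lean document; each statement's English description precedes it below -/
import Mathlib

section
/- Let G̃ be a group with subgroups G and H such that every element of G̃ factors uniquely as a product u·g with u ∈ H and g ∈ G, and let F₊, F₋ : G̃ → G be group homomorphisms restricting to the identity on G. Define δ : H → G by δ(u) = F₊(u)·F₋(u)⁻¹, and for g ∈ G, u ∈ H define λ_g(u) ∈ H by g·u = λ_g(u)·ρ_g(u) with ρ_g(u) ∈ G. Then the augmentation identity holds: δ(λ_g(u)) = g · δ(u) · g⁻¹ for all g ∈ G and u ∈ H; in other words, H with the right G-action u·g := λ_{g⁻¹}(u) and the map δ is a crossed G-set. -/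
/-- In the group-theoretic model of the double of a quasitriangular Poisson Lie
group, the augmentation identity holds: `δ(λ_g(u)) = g·δ(u)·g⁻¹`, where
`δ(u) = F₊(u)·F₋(u)⁻¹` and `g·u = λ_g(u)·ρ_g(u)`.  Equivalently, `H` with the
right action `u·g := λ_{g⁻¹}(u)` and the map `δ` is a crossed `G`-set. -/
theorem dressing_augmentation {Gt : Type*} [Group Gt] (G H : Subgroup Gt)
    (huniq : ∀ x : Gt, ∃! p : H × G, (p.1 : Gt) * (p.2 : Gt) = x)
    (lam : G → H → H) (rho : G → H → G)
    (hfact : ∀ (g : G) (u : H),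
      (g : Gt) * (u : Gt) = (lam g u : Gt) * (rho g u : Gt))
    (Fp Fm : Gt →* Gt)
    (hFp_mem : ∀ x : Gt, Fp x ∈ G) (hFm_mem : ∀ x : Gt, Fm x ∈ G)
    (hFp_id : ∀ g ∈ G, Fp g = g) (hFm_id : ∀ g ∈ G, Fm g = g) :
    (∀ (g : G) (u : H),
      Fp (lam g u : Gt) * (Fm (lam g u : Gt))⁻¹
        = (g : Gt) * (Fp (u : Gt) * (Fm (u : Gt))⁻¹) * (g : Gt)⁻¹) ∧
    (∀ (g : G) (u : H),
      Fp (lam g⁻¹ u : Gt) * (Fm (lam g⁻¹ u : Gt))⁻¹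
        = (g : Gt)⁻¹ * (Fp (u : Gt) * (Fm (u : Gt))⁻¹) * (g : Gt)) := by
  have key : ∀ (g : G) (u : H),
      Fp (lam g u : Gt) * (Fm (lam g u : Gt))⁻¹
        = (g : Gt) * (Fp (u : Gt) * (Fm (u : Gt))⁻¹) * (g : Gt)⁻¹ := by
    intro g u
    have hp : Fp (lam g u : Gt) = (g : Gt) * Fp (u : Gt) * (rho g u : Gt)⁻¹ := by
      have := congrArg Fp (hfact g u)
      rw [map_mul, map_mul, hFp_id _ g.2, hFp_id _ (rho g u).2] at this
      rw [this]; group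
    have hm : Fm (lam g u : Gt) = (g : Gt) * Fm (u : Gt) * (rho g u : Gt)⁻¹ := by
      have := congrArg Fm (hfact g u)
      rw [map_mul, map_mul, hFm_id _ g.2, hFm_id _ (rho g u).2] at this
      rw [this]; group
    rw [hp, hm]
    group
  refine ⟨key, fun g u => ?_⟩
  simpa using key g⁻¹ u
end

section
/- Let G̃ be a group with subgroups G and H such that every element of G̃ factors uniquely as a product u·g with u ∈ H and g ∈ G, and let F₊, F₋ : G̃ → G be group homomorphisms restricting to the identity on G. Define δ : H → G by δ(u) = F₊(u)·F₋(u)⁻¹ and λ_g(u) ∈ H by g·u = λ_g(u)·ρ_g(u) with ρ_g(u) ∈ G. Then the operation b^a := λ_{δ(a)⁻¹}(b) makes H into a rack: for all a,b ∈ H there is a unique c ∈ H with c^a = b, and (a^b)^c = (a^c)^(b^c) for all a,b,c ∈ H. -/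
/-- Group-theoretic form of the Poisson Lie quandle: with `δ(u) = F₊(u)·F₋(u)⁻¹`
(which lies in `G`) and the dressing action `λ` defined by
`g·u = λ_g(u)·ρ_g(u)`, the operation `b^a := λ_{δ(a)⁻¹}(b)` makes `H` a rack. -/
theorem poisson_lie_rack {Gt : Type*} [Group Gt] (G H : Subgroup Gt)
    (huniq : ∀ x : Gt, ∃! p : H × G, (p.1 : Gt) * (p.2 : Gt) = x)
    (lam : G → H → H) (rho : G → H → G)
    (hfact : ∀ (g : G) (u : H),
      (g : Gt) * (u : Gt) = (lam g u : Gt) * (rho g u : Gt))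
    (Fp Fm : Gt →* Gt)
    (hFp_mem : ∀ x : Gt, Fp x ∈ G) (hFm_mem : ∀ x : Gt, Fm x ∈ G)
    (hFp_id : ∀ g ∈ G, Fp g = g) (hFm_id : ∀ g ∈ G, Fm g = g)
    (d : H → G)
    (hd : ∀ u : H, (d u : Gt) = Fp (u : Gt) * (Fm (u : Gt))⁻¹) :
    (∀ a b : H, ∃! c : H, lam (d a)⁻¹ c = b) ∧
    (∀ a b c : H,
      lam (d c)⁻¹ (lam (d b)⁻¹ a)
        = lam (d (lam (d c)⁻¹ b))⁻¹ (lam (d c)⁻¹ a)) := by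
  -- uniqueness of factorizations
  have uniq : ∀ (u₁ u₂ : H) (g₁ g₂ : G),
      (u₁ : Gt) * (g₁ : Gt) = (u₂ : Gt) * (g₂ : Gt) → u₁ = u₂ ∧ g₁ = g₂ := by
    intro u₁ u₂ g₁ g₂ h
    obtain ⟨p, hp, hup⟩ := huniq ((u₁ : Gt) * (g₁ : Gt))
    have h1 := hup (u₁, g₁) rfl
    have h2 := hup (u₂, g₂) h.symm
    have := h1.trans h2.symm
    exact ⟨congrArg Prod.fst this, congrArg Prod.snd this⟩
  have lam_one : ∀ u : H, lam 1 u = u := by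
    intro u
    have h := hfact 1 u
    refine (uniq (lam 1 u) u (rho 1 u) 1 ?_).1
    rw [← h]; simp
  have lam_mul : ∀ (g h : G) (u : H), lam (g * h) u = lam g (lam h u) := by
    intro g h u
    have e : ((g * h : G) : Gt) * (u : Gt)
        = (lam g (lam h u) : Gt) * ((rho g (lam h u) * rho h u : G) : Gt) := by
      push_cast
      rw [mul_assoc, hfact h u, ← mul_assoc, hfact g (lam h u), mul_assoc]
    exact (uniq _ _ _ _ ((hfact (g * h) u).symm.trans e)).1
  have d_lam : ∀ (g : G) (u : H), d (lam g u) = g * d u * g⁻¹ := by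
    intro g u
    have hFpl : Fp (lam g u : Gt) = (g : Gt) * Fp (u : Gt) * (rho g u : Gt)⁻¹ := by
      have h := congrArg Fp (hfact g u)
      rw [map_mul, map_mul, hFp_id _ g.2, hFp_id _ (rho g u).2] at h
      exact eq_mul_inv_of_mul_eq h.symm
    have hFml : Fm (lam g u : Gt) = (g : Gt) * Fm (u : Gt) * (rho g u : Gt)⁻¹ := by
      have h := congrArg Fm (hfact g u)
      rw [map_mul, map_mul, hFm_id _ g.2, hFm_id _ (rho g u).2] at h
      exact eq_mul_inv_of_mul_eq h.symm
    apply Subtype.ext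
    push_cast
    rw [hd, hFpl, hFml, hd]
    group
  refine ⟨?_, ?_⟩
  · intro a b
    refine ⟨lam (d a) b, ?_, ?_⟩
    · show lam (d a)⁻¹ (lam (d a) b) = b
      rw [← lam_mul, inv_mul_cancel, lam_one]
    · intro c hc
      rw [← hc, ← lam_mul, mul_inv_cancel, lam_one]
  · intro a b c
    rw [← lam_mul, ← lam_mul, d_lam]
    congr 1
    group
end

section
/- Let Δ be a quandle (a rack satisfying a^a = a for all a), let n ≥ 1, and let f : Δⁿ → Δⁿ be an arbitrary map. Define F : Δ^{n+1} → Δ^{n+1} by F(x₁,…,x_{n+1}) = (y₁,…,y_{n−1}, x_{n+1}, yₙ^{x_{n+1}}), where (y₁,…,yₙ) = f(x₁,…,xₙ) (this is the map of Δ^{n+1} assigned to the braid A·bₙ when f is assigned to A ∈ Bₙ). Then (x₁,…,x_{n+1}) is a fixed point of F if and only if (x₁,…,xₙ) is a fixed point of f and x_{n+1} = xₙ. In particular the fixed point set of F on Δ^{n+1} is in bijection with the fixed point set of f on Δⁿ. -/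
/-- The map of `Δ^{n+1}` assigned to the positively stabilized braid `A·bₙ`,
when `f : Δⁿ → Δⁿ` is the map assigned to `A ∈ Bₙ`:
`(x₁,…,x_{n+1}) ↦ (y₁,…,y_{n−1}, x_{n+1}, yₙ^{x_{n+1}})` where `y = f(x₁,…,xₙ)`. -/
def posStab {Δ : Type*} (op : Δ → Δ → Δ) {n : ℕ} (hn : 1 ≤ n)
    (f : (Fin n → Δ) → (Fin n → Δ)) (x : Fin (n + 1) → Δ) : Fin (n + 1) → Δ :=
  fun j =>
    if h : (j : ℕ) < n - 1 then f (Fin.init x) ⟨j, by omega⟩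
    else if (j : ℕ) = n - 1 then x (Fin.last n)
    else op (f (Fin.init x) ⟨n - 1, by omega⟩) (x (Fin.last n))

lemma key_iff {Δ : Type*} (op : Δ → Δ → Δ)
    (hinv : ∀ a b : Δ, ∃! c : Δ, op c b = a)
    (hq : ∀ a : Δ, op a a = a)
    {n : ℕ} (hn : 1 ≤ n) (f : (Fin n → Δ) → (Fin n → Δ))
    (x : Fin (n + 1) → Δ) :
    posStab op hn f x = x ↔
      (f (Fin.init x) = Fin.init x ∧
        x (Fin.last n) = x ⟨n - 1, Nat.lt_succ_of_le (Nat.sub_le n 1)⟩) := by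
  constructor
  · intro h
    have hcoord : ∀ j : Fin (n + 1), posStab op hn f x j = x j := fun j => congrFun h j
    have hmid : x (Fin.last n) = x ⟨n - 1, by omega⟩ := by
      have := hcoord ⟨n - 1, by omega⟩
      simp only [posStab] at this
      rw [dif_neg (by omega), if_pos (by simp)] at this
      exact this
    have hlastcoord : op (f (Fin.init x) ⟨n - 1, by omega⟩) (x (Fin.last n)) = x (Fin.last n) := by
      have := hcoord (Fin.last n)
      simp only [posStab, Fin.val_last] at this
      rw [dif_neg (by omega), if_neg (by omega)] at this
      exact this
    have hfn1 : f (Fin.init x) ⟨n - 1, by omega⟩ = x (Fin.last n) := by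
      obtain ⟨c, _, huniq⟩ := hinv (x (Fin.last n)) (x (Fin.last n))
      have h1 := huniq _ hlastcoord
      have h2 := huniq _ (hq (x (Fin.last n)))
      rw [h1, h2]
    refine ⟨funext fun i => ?_, hmid⟩
    rcases lt_or_ge (i : ℕ) (n - 1) with hi | hi
    · have hc := hcoord (Fin.castSucc i)
      simp only [posStab, Fin.coe_castSucc] at hc
      rw [dif_pos hi] at hc
      have e : (⟨(i : ℕ), by omega⟩ : Fin n) = i := Fin.ext rfl
      rw [e] at hc
      exact hc
    · have hieq : (i : ℕ) = n - 1 := by omega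
      have hie : i = ⟨n - 1, by omega⟩ := Fin.ext hieq
      rw [hie, hfn1, hmid]
      show x _ = x (Fin.castSucc _)
      exact congrArg x (Fin.ext rfl)
  · rintro ⟨hf, hmid⟩
    funext j
    simp only [posStab]
    split_ifs with h1 h2
    · rw [hf]
      show x (Fin.castSucc _) = x j
      exact congrArg x (Fin.ext rfl)
    · rw [hmid]
      congr 1
      exact Fin.ext h2.symm
    · have hj : (j : ℕ) = n := by omega
      have : j = Fin.last n := Fin.ext hj
      subst this
      rw [hf]
      have h1 : Fin.init x ⟨n - 1, by omega⟩ = x ⟨n - 1, by omega⟩ := by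
        simp [Fin.init, Fin.castSucc, Fin.ext_iff]
      rw [h1, ← hmid, hq]

/-- Markov move (positive stabilization) for quandles: `(x₁,…,x_{n+1})` is a
fixed point of the stabilized map iff `(x₁,…,xₙ)` is a fixed point of `f` and
`x_{n+1} = xₙ`; hence the fixed point sets are in bijection. -/
theorem quandle_positive_markov {Δ : Type*} (op : Δ → Δ → Δ)
    (hinv : ∀ a b : Δ, ∃! c : Δ, op c b = a)
    (hdist : ∀ a b c : Δ, op (op a b) c = op (op a c) (op b c))
    (hq : ∀ a : Δ, op a a = a)
    {n : ℕ} (hn : 1 ≤ n) (f : (Fin n → Δ) → (Fin n → Δ)) :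
    (∀ x : Fin (n + 1) → Δ,
      posStab op hn f x = x ↔
        (f (Fin.init x) = Fin.init x ∧
          x (Fin.last n) = x ⟨n - 1, by omega⟩)) ∧
    Nonempty
      ({x : Fin (n + 1) → Δ // posStab op hn f x = x} ≃
        {x : Fin n → Δ // f x = x}) := by
  have key := key_iff op hinv hq hn f
  refine ⟨key, ⟨?_⟩⟩
  have hcast : ∀ y : Fin n → Δ,
      Fin.init (Fin.snoc y (y ⟨n - 1, by omega⟩) : Fin (n + 1) → Δ) = y :=
    fun y => Fin.init_snoc _ _
  refine
    { toFun := fun x => ⟨Fin.init x.1, ((key x.1).mp x.2).1⟩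
      invFun := fun y => ⟨Fin.snoc y.1 (y.1 ⟨n - 1, by omega⟩), ?_⟩
      left_inv := ?_
      right_inv := ?_ }
  · rw [key]
    constructor
    · rw [hcast]; exact y.2
    · rw [Fin.snoc_last]
      have : (⟨n - 1, by omega⟩ : Fin (n + 1)) =
          Fin.castSucc ⟨n - 1, by omega⟩ := Fin.ext rfl
      rw [this, Fin.snoc_castSucc]
  · rintro ⟨x, hx⟩
    ext : 1
    simp only
    have hmid := ((key x).mp hx).2
    have h1 : Fin.init x ⟨n - 1, by omega⟩ = x ⟨n - 1, by omega⟩ := by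
      simp [Fin.init, Fin.castSucc, Fin.ext_iff]
    rw [h1, ← hmid, Fin.snoc_init_self]
  · rintro ⟨y, hy⟩
    ext : 1
    exact hcast y
end

section
/- Let 𝔤 be a finite-dimensional Lie algebra over a field k of characteristic zero and let r = Σᵢ aᵢ ⊗ bᵢ ∈ 𝔤 ⊗ 𝔤 satisfy: (1) the classical Yang–Baxter equation [r₁₂, r₁₃] + [r₁₂, r₂₃] + [r₁₃, r₂₃] = 0 in 𝔤 ⊗ 𝔤 ⊗ 𝔤, where [r₁₂, r₁₃] = Σ_{i,j} [aᵢ, aⱼ] ⊗ bᵢ ⊗ bⱼ, [r₁₂, r₂₃] = Σ_{i,j} aᵢ ⊗ [bᵢ, aⱼ] ⊗ bⱼ, [r₁₃, r₂₃] = Σ_{i,j} aᵢ ⊗ aⱼ ⊗ [bᵢ, bⱼ]; and (2) the symmetric part r + P(r) is ad-invariant, i.e. (ad_X ⊗ id + id ⊗ ad_X)(r + P(r)) = 0 for all X ∈ 𝔤, where P(x ⊗ y) = y ⊗ x. Define linear maps r₊, r₋ : 𝔤* → 𝔤 by r₊(ξ) = Σᵢ ξ(aᵢ) bᵢ and r₋(ξ)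 = −Σᵢ ξ(bᵢ) aᵢ, and define a bracket on 𝔤* by [ξ, η]* = ad*_{r₊(ξ)} η − ad*_{r₋(η)} ξ, where (ad*_X ξ)(Y) = −ξ([X, Y]). Then both r₊ and r₋ intertwine the brackets: r₊([ξ, η]*) = [r₊(ξ), r₊(η)] and r₋([ξ, η]*) = [r₋(ξ), r₋(η)] for all ξ, η ∈ 𝔤*. -/
open TensorProduct

/-- `r₊(ξ) = ⟨r, ξ ⊗ id⟩ = Σᵢ ξ(aᵢ) • bᵢ` for `r = Σᵢ aᵢ ⊗ bᵢ`. -/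
noncomputable def rPlus {k L : Type*} [Field k] [LieRing L] [LieAlgebra k L]
    {m : ℕ} (a b : Fin m → L) (ξ : Module.Dual k L) : L :=
  ∑ i, ξ (a i) • b i

/-- `r₋(ξ) = −⟨r, id ⊗ ξ⟩ = −Σᵢ ξ(bᵢ) • aᵢ` for `r = Σᵢ aᵢ ⊗ bᵢ`. -/
noncomputable def rMinus {k L : Type*} [Field k] [LieRing L] [LieAlgebra k L]
    {m : ℕ} (a b : Fin m → L) (ξ : Module.Dual k L) : L :=
  -∑ i, ξ (b i) • a i

/-- The coadjoint action: `(ad*_X ξ)(Y) = −ξ([X, Y])`. -/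
noncomputable def coad {k L : Type*} [Field k] [LieRing L] [LieAlgebra k L]
    (X : L) (ξ : Module.Dual k L) : Module.Dual k L :=
  -(ξ ∘ₗ LieAlgebra.ad k L X)

/-- The induced bracket on `𝔤*`: `[ξ, η]* = ad*_{r₊(ξ)} η − ad*_{r₋(η)} ξ`. -/
noncomputable def dualBracket {k L : Type*} [Field k] [LieRing L] [LieAlgebra k L]
    {m : ℕ} (a b : Fin m → L) (ξ η : Module.Dual k L) : Module.Dual k L :=
  coad (rPlus a b ξ) η - coad (rMinus a b η) ξ

lemma lie_sum' {L ι : Type*} [LieRing L]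
    (s : Finset ι) (x : L) (f : ι → L) :
    ⁅x, ∑ i ∈ s, f i⁆ = ∑ i ∈ s, ⁅x, f i⁆ := by
  induction s using Finset.cons_induction with
  | empty => simp
  | cons i s hi ih => simp [Finset.sum_cons, ih]

lemma sum_lie' {L ι : Type*} [LieRing L]
    (s : Finset ι) (y : L) (f : ι → L) :
    ⁅∑ i ∈ s, f i, y⁆ = ∑ i ∈ s, ⁅f i, y⁆ := by
  induction s using Finset.cons_induction with
  | empty => simp
  | cons i s hi ih => simp [Finset.sum_cons, ih]

/-- Auxiliary evaluation map `y ⊗ z ↦ η(y) • z`. -/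
noncomputable def evInner {k L : Type*} [Field k] [AddCommGroup L] [Module k L]
    (η : Module.Dual k L) : L ⊗[k] L →ₗ[k] L :=
  TensorProduct.lift ((LinearMap.lsmul k L).comp η)

/-- Auxiliary evaluation map `x ⊗ (y ⊗ z) ↦ ξ(x) • η(y) • z`. -/
noncomputable def ev3 {k L : Type*} [Field k] [AddCommGroup L] [Module k L]
    (ξ η : Module.Dual k L) : L ⊗[k] (L ⊗[k] L) →ₗ[k] L :=
  TensorProduct.lift ((((LinearMap.lsmul k ((L ⊗[k] L) →ₗ[k] L)).comp ξ).flip) (evInner η))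

@[simp] lemma ev3_tmul {k L : Type*} [Field k] [AddCommGroup L] [Module k L]
    (ξ η : Module.Dual k L) (x y z : L) :
    ev3 ξ η (x ⊗ₜ[k] (y ⊗ₜ[k] z)) = ξ x • η y • z := by
  simp [ev3, evInner]

/-- Auxiliary evaluation map `y ⊗ z ↦ ξ(y) * η(z)`. -/
noncomputable def inner2 {k L : Type*} [Field k] [AddCommGroup L] [Module k L]
    (ξ η : Module.Dual k L) : L ⊗[k] L →ₗ[k] k :=
  TensorProduct.lift (((LinearMap.lsmul k (Module.Dual k L)).comp ξ).flip η)

/-- Auxiliary evaluation map `x ⊗ (y ⊗ z) ↦ (ξ(y) * η(z)) • x`. -/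
noncomputable def ev3' {k L : Type*} [Field k] [AddCommGroup L] [Module k L]
    (ξ η : Module.Dual k L) : L ⊗[k] (L ⊗[k] L) →ₗ[k] L :=
  TensorProduct.lift (((LinearMap.lsmul k L).comp (inner2 ξ η)).flip)

@[simp] lemma ev3'_tmul {k L : Type*} [Field k] [AddCommGroup L] [Module k L]
    (ξ η : Module.Dual k L) (x y z : L) :
    ev3' ξ η (x ⊗ₜ[k] (y ⊗ₜ[k] z)) = (ξ y * η z) • x := by
  simp [ev3', inner2, smul_smul]


/-- For a quasitriangular structure `r = Σᵢ aᵢ ⊗ bᵢ` (classical Yang–Baxter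
equation plus ad-invariant symmetric part) on a finite-dimensional Lie algebra
over a field of characteristic zero, the maps `r₊, r₋ : 𝔤* → 𝔤` are Lie algebra
homomorphisms for the induced bracket `[ξ, η]* = ad*_{r₊(ξ)} η − ad*_{r₋(η)} ξ`. -/
theorem rPlus_rMinus_lieHom {k L : Type*} [Field k] [CharZero k]
    [LieRing L] [LieAlgebra k L] [FiniteDimensional k L]
    {m : ℕ} (a b : Fin m → L)
    (hCYBE : ∑ i, ∑ j,
        (⁅a i, a j⁆ ⊗ₜ[k] (b i ⊗ₜ[k] b j)
          + a i ⊗ₜ[k] (⁅b i, a j⁆ ⊗ₜ[k] b j)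
          + a i ⊗ₜ[k] (a j ⊗ₜ[k] ⁅b i, b j⁆))
      = (0 : L ⊗[k] (L ⊗[k] L)))
    (hsym : ∀ X : L, ∑ i,
        (⁅X, a i⁆ ⊗ₜ[k] b i + a i ⊗ₜ[k] ⁅X, b i⁆
          + ⁅X, b i⁆ ⊗ₜ[k] a i + b i ⊗ₜ[k] ⁅X, a i⁆)
      = (0 : L ⊗[k] L)) :
    ∀ ξ η : Module.Dual k L,
      rPlus a b (dualBracket a b ξ η) = ⁅rPlus a b ξ, rPlus a b η⁆ ∧
      rMinus a b (dualBracket a b ξ η) = ⁅rMinus a b ξ, rMinus a b η⁆ := by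
  intro ξ η
  have h1 := congrArg (ev3 ξ η) hCYBE
  have h2 := congrArg (ev3' ξ η) hCYBE
  simp only [map_sum, map_add, ev3_tmul, ev3'_tmul, map_zero] at h1 h2
  constructor
  · unfold rPlus dualBracket coad rMinus
    simp only [LinearMap.sub_apply, LinearMap.neg_apply, LinearMap.comp_apply,
      LieAlgebra.ad_apply, map_sum, map_neg, map_smul, sum_lie', lie_sum',
      smul_lie, lie_smul, smul_smul, neg_neg, sub_smul, neg_smul, smul_eq_mul,
      Finset.smul_sum, Finset.sum_smul, rPlus, neg_lie, LinearMap.sum_apply, LinearMap.smul_apply]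
    rw [Finset.sum_comm] at h1
    rw [← sub_eq_zero, ← neg_eq_zero, neg_sub, ← h1]
    simp only [← Finset.sum_neg_distrib, ← Finset.sum_sub_distrib]
    refine Finset.sum_congr rfl fun j _ => Finset.sum_congr rfl fun i _ => ?_
    module
  · unfold rMinus dualBracket coad rPlus
    simp only [LinearMap.sub_apply, LinearMap.neg_apply, LinearMap.comp_apply,
      LieAlgebra.ad_apply, map_sum, map_neg, map_smul, sum_lie', lie_sum',
      smul_lie, lie_smul, smul_smul, neg_neg, sub_smul, neg_smul, smul_eq_mul,
      Finset.smul_sum, Finset.sum_smul, neg_lie, lie_neg, rMinus, LinearMap.sum_apply, LinearMap.smul_apply]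
    simp only [smul_neg, neg_neg, Finset.sum_neg_distrib, neg_sub, Finset.smul_sum,
      smul_smul]
    conv_rhs => rw [Finset.sum_comm]
    rw [← sub_eq_zero, ← neg_eq_zero, neg_sub, ← h2]
    simp only [← Finset.sum_neg_distrib, ← Finset.sum_sub_distrib, sub_neg_eq_add,
      ← Finset.sum_add_distrib]
    refine Finset.sum_congr rfl fun x _ => Finset.sum_congr rfl fun i _ => ?_
    rw [← lie_skew (b i) (b x), ← lie_skew (a i) (b x), map_neg, map_neg]
    module
end

section
/- Let 𝔤 be a finite-dimensional Lie algebra over a field k of characteristic zero and let r = Σᵢ aᵢ ⊗ bᵢ ∈ 𝔤 ⊗ 𝔤 satisfy the classical Yang–Baxter equation [r₁₂, r₁₃] + [r₁₂, r₂₃] + [r₁₃, r₂₃] = 0 in 𝔤 ⊗ 𝔤 ⊗ 𝔤 and have ad-invariant symmetric part, i.e. (ad_X ⊗ id + id ⊗ ad_X)(r + P(r)) = 0 for all X ∈ 𝔤. Define r₊(ξ) = Σᵢ ξ(aᵢ) bᵢ, r₋(ξ) = −Σᵢ ξ(bᵢ) aᵢ, and the bracket [ξ, η]* = ad*_{r₊(ξ)}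 η − ad*_{r₋(η)} ξ on 𝔤*, where (ad*_X ξ)(Y) = −ξ([X, Y]). Then [·,·]* is a Lie bracket on 𝔤*: it is bilinear, antisymmetric ([ξ, η]* = −[η, ξ]* for all ξ, η), and satisfies the Jacobi identity [ξ, [η, ζ]*]* + [η, [ζ, ξ]*]* + [ζ, [ξ, η]*]* = 0 for all ξ, η, ζ ∈ 𝔤*. -/
open TensorProduct

set_option maxHeartbeats 4000000 in
/-- For a quasitriangular structure `r = Σᵢ aᵢ ⊗ bᵢ` (classical Yang–Baxter
equation plus ad-invariant symmetric part) on a finite-dimensional Lie algebra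
over a field of characteristic zero, the bracket
`[ξ, η]* = ad*_{r₊(ξ)} η − ad*_{r₋(η)} ξ` is a Lie bracket on `𝔤*`: it is
bilinear, antisymmetric, and satisfies the Jacobi identity. -/
theorem dualBracket_lie {k L : Type*} [Field k] [CharZero k]
    [LieRing L] [LieAlgebra k L] [FiniteDimensional k L]
    {m : ℕ} (a b : Fin m → L)
    (hCYBE : ∑ i, ∑ j,
        (⁅a i, a j⁆ ⊗ₜ[k] (b i ⊗ₜ[k] b j)
          + a i ⊗ₜ[k] (⁅b i, a j⁆ ⊗ₜ[k] b j)
          + a i ⊗ₜ[k] (a j ⊗ₜ[k] ⁅b i, b j⁆))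
      = (0 : L ⊗[k] (L ⊗[k] L)))
    (hsym : ∀ X : L, ∑ i,
        (⁅X, a i⁆ ⊗ₜ[k] b i + a i ⊗ₜ[k] ⁅X, b i⁆
          + ⁅X, b i⁆ ⊗ₜ[k] a i + b i ⊗ₜ[k] ⁅X, a i⁆)
      = (0 : L ⊗[k] L)) :
    (∀ (c : k) (ξ ξ' η : Module.Dual k L),
      dualBracket a b (c • ξ + ξ') η
        = c • dualBracket a b ξ η + dualBracket a b ξ' η) ∧
    (∀ (c : k) (ξ η η' : Module.Dual k L),
      dualBracket a b ξ (c • η + η')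
        = c • dualBracket a b ξ η + dualBracket a b ξ η') ∧
    (∀ ξ η : Module.Dual k L, dualBracket a b ξ η = -dualBracket a b η ξ) ∧
    (∀ ξ η ζ : Module.Dual k L,
      dualBracket a b ξ (dualBracket a b η ζ)
        + dualBracket a b η (dualBracket a b ζ ξ)
        + dualBracket a b ζ (dualBracket a b ξ η) = 0) := by
  classical
  have hC : ∀ f g h : Module.Dual k L, ∑ i, ∑ j,
      (f ⁅a i, a j⁆ * (g (b i) * h (b j)) + f (a i) * (g ⁅b i, a j⁆ * h (b j))
        + f (a i) * (g (a j) * h ⁅b i, b j⁆)) = 0 := by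
    intro f g h
    have h0 := congrArg (TensorProduct.lift ((LinearMap.mul k k).compl₁₂ f
      (TensorProduct.lift ((LinearMap.mul k k).compl₁₂ g h)))) hCYBE
    simpa [map_sum, map_add, TensorProduct.lift.tmul, LinearMap.compl₁₂_apply,
      LinearMap.mul_apply'] using h0
  have hS : ∀ (f g : Module.Dual k L) (X : L), ∑ i,
      (f ⁅X, a i⁆ * g (b i) + f (a i) * g ⁅X, b i⁆ + f ⁅X, b i⁆ * g (a i)
        + f (b i) * g ⁅X, a i⁆) = 0 := by
    intro f g X
    have h0 := congrArg (TensorProduct.lift ((LinearMap.mul k k).compl₁₂ f g)) (hsym X)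
    simpa [map_sum, map_add, TensorProduct.lift.tmul, LinearMap.compl₁₂_apply,
      LinearMap.mul_apply'] using h0
  have hDB : ∀ (ξ η : Module.Dual k L) (Z : L),
      dualBracket a b ξ η Z = ∑ i, (ξ (a i) * η ⁅Z, b i⁆ + η (b i) * ξ ⁅Z, a i⁆) := by
    intro ξ η Z
    have adl : ∀ x : L, ⁅x, Z⁆ = -(LieAlgebra.ad k L Z x) := fun x => by
      rw [LieAlgebra.ad_apply]; exact (lie_skew x Z).symm
    rw [dualBracket, LinearMap.sub_apply]
    simp only [coad, LinearMap.neg_apply, LinearMap.comp_apply, LieAlgebra.ad_apply]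
    rw [rPlus, rMinus, adl, adl]
    simp only [map_neg, map_sum, map_smul, neg_neg]
    simp [LieAlgebra.ad_apply, smul_eq_mul, Finset.sum_add_distrib]
  refine ⟨?_, ?_, ?_, ?_⟩
  · intro c ξ ξ' η
    ext Z
    simp only [LinearMap.add_apply, LinearMap.smul_apply, hDB, smul_eq_mul]
    rw [Finset.mul_sum, ← Finset.sum_add_distrib]
    exact Finset.sum_congr rfl fun i _ => by ring
  · intro c ξ η η'
    ext Z
    simp only [LinearMap.add_apply, LinearMap.smul_apply, hDB, smul_eq_mul]
    rw [Finset.mul_sum, ← Finset.sum_add_distrib]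
    exact Finset.sum_congr rfl fun i _ => by ring
  · intro ξ η
    ext Z
    simp only [LinearMap.neg_apply, hDB]
    rw [eq_neg_iff_add_eq_zero, ← Finset.sum_add_distrib, ← hS ξ η Z]
    exact Finset.sum_congr rfl fun i _ => by ring
  · -- Jacobi identity
    intro ξ η ζ
    ext Z
    have hCt : ∀ f g h : Module.Dual k L, ∑ i, ∑ j,
        (f ⁅Z, ⁅a i, a j⁆⁆ * (g (b i) * h (b j)) + f ⁅Z, a i⁆ * (g ⁅b i, a j⁆ * h (b j))
          + f ⁅Z, a i⁆ * (g (a j) * h ⁅b i, b j⁆)) = 0 := fun f g h => by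
      simpa [LieAlgebra.ad_apply] using hC (f ∘ₗ LieAlgebra.ad k L Z) g h
    have hSD : ∀ (f g : Module.Dual k L) (Y X : L), ∑ i,
        (f ⁅Y, ⁅X, a i⁆⁆ * g (b i) + f ⁅Y, a i⁆ * g ⁅X, b i⁆
          + f ⁅Y, ⁅X, b i⁆⁆ * g (a i) + f ⁅Y, b i⁆ * g ⁅X, a i⁆) = 0 := fun f g Y X => by
      simpa [LieAlgebra.ad_apply] using hS (f ∘ₗ LieAlgebra.ad k L Y) g X
    have expand : ∀ x y z : Module.Dual k L,
        dualBracket a b x (dualBracket a b y z) Z = ∑ i, ∑ j,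
          (x (a i) * (y (a j) * z ⁅⁅Z, b i⁆, b j⁆) + x (a i) * (z (b j) * y ⁅⁅Z, b i⁆, a j⁆) + y (a j) * (z ⁅b i, b j⁆ * x ⁅Z, a i⁆) + z (b j) * (y ⁅b i, a j⁆ * x ⁅Z, a i⁆)) := by
      intro x y z
      simp only [hDB]
      refine Finset.sum_congr rfl fun i _ => ?_
      rw [Finset.mul_sum, Finset.sum_mul, ← Finset.sum_add_distrib]
      refine Finset.sum_congr rfl fun j _ => by ring
    simp only [LinearMap.add_apply, LinearMap.zero_apply]
    rw [expand ξ η ζ, expand η ζ ξ, expand ζ ξ η]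
    simp only [← Finset.sum_add_distrib]
    have zl : ∀ x : L, ⁅Z, x⁆ = -⁅x, Z⁆ := fun x => (lie_skew Z x).symm
    have EC1 : ∑ i, ∑ j, (ξ ⁅Z, ⁅a i, a j⁆⁆ * (η (b i) * ζ (b j)) + ξ ⁅Z, a i⁆ * (η ⁅b i, a j⁆ * ζ (b j)) + ξ ⁅Z, a i⁆ * (η (a j) * ζ ⁅b i, b j⁆)) = 0 := hCt ξ η ζ
    have EC1s : ∑ i, ∑ j, (ξ ⁅Z, ⁅a j, a i⁆⁆ * (η (b j) * ζ (b i)) + ξ ⁅Z, a j⁆ * (η ⁅b j, a i⁆ * ζ (b i)) + ξ ⁅Z, a j⁆ * (η (a i) * ζ ⁅b j, b i⁆)) = 0 := by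
      rw [Finset.sum_comm]; exact hCt ξ η ζ
    have EC2 : ∑ i, ∑ j, (η ⁅Z, ⁅a i, a j⁆⁆ * (ζ (b i) * ξ (b j)) + η ⁅Z, a i⁆ * (ζ ⁅b i, a j⁆ * ξ (b j)) + η ⁅Z, a i⁆ * (ζ (a j) * ξ ⁅b i, b j⁆)) = 0 := hCt η ζ ξ
    have EC2s : ∑ i, ∑ j, (η ⁅Z, ⁅a j, a i⁆⁆ * (ζ (b j) * ξ (b i)) + η ⁅Z, a j⁆ * (ζ ⁅b j, a i⁆ * ξ (b i)) + η ⁅Z, a j⁆ * (ζ (a i) * ξ ⁅b j, b i⁆)) = 0 := by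
      rw [Finset.sum_comm]; exact hCt η ζ ξ
    have EC3 : ∑ i, ∑ j, (ζ ⁅Z, ⁅a i, a j⁆⁆ * (ξ (b i) * η (b j)) + ζ ⁅Z, a i⁆ * (ξ ⁅b i, a j⁆ * η (b j)) + ζ ⁅Z, a i⁆ * (ξ (a j) * η ⁅b i, b j⁆)) = 0 := hCt ζ ξ η
    have EC3s : ∑ i, ∑ j, (ζ ⁅Z, ⁅a j, a i⁆⁆ * (ξ (b j) * η (b i)) + ζ ⁅Z, a j⁆ * (ξ ⁅b j, a i⁆ * η (b i)) + ζ ⁅Z, a j⁆ * (ξ (a i) * η ⁅b j, b i⁆)) = 0 := by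
      rw [Finset.sum_comm]; exact hCt ζ ξ η
    have ES1 : ∑ i, ∑ j, (ξ (a j) * (η ⁅Z, ⁅b j, a i⁆⁆ * ζ (b i) + η ⁅Z, a i⁆ * ζ ⁅b j, b i⁆ + η ⁅Z, ⁅b j, b i⁆⁆ * ζ (a i) + η ⁅Z, b i⁆ * ζ ⁅b j, a i⁆)) = 0 := by
      rw [Finset.sum_comm]
      exact Finset.sum_eq_zero fun p _ => by rw [← Finset.mul_sum, hSD η ζ Z (b p), mul_zero]
    have ES1s : ∑ i, ∑ j, (ξ (a i) * (η ⁅Z, ⁅b i, a j⁆⁆ * ζ (b j) + η ⁅Z, a j⁆ * ζ ⁅b i, b j⁆ + η ⁅Z, ⁅b i, b j⁆⁆ * ζ (a j) + η ⁅Z, b j⁆ * ζ ⁅b i, a j⁆)) = 0 := by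
      exact Finset.sum_eq_zero fun p _ => by rw [← Finset.mul_sum, hSD η ζ Z (b p), mul_zero]
    have ES2 : ∑ i, ∑ j, (ξ (a j) * (ζ ⁅Z, ⁅b j, a i⁆⁆ * η (b i) + ζ ⁅Z, a i⁆ * η ⁅b j, b i⁆ + ζ ⁅Z, ⁅b j, b i⁆⁆ * η (a i) + ζ ⁅Z, b i⁆ * η ⁅b j, a i⁆)) = 0 := by
      rw [Finset.sum_comm]
      exact Finset.sum_eq_zero fun p _ => by rw [← Finset.mul_sum, hSD ζ η Z (b p), mul_zero]
    have ES2s : ∑ i, ∑ j, (ξ (a i) * (ζ ⁅Z, ⁅b i, a j⁆⁆ * η (b j) + ζ ⁅Z, a j⁆ * η ⁅b i, b j⁆ + ζ ⁅Z, ⁅b i, b j⁆⁆ * η (a j) + ζ ⁅Z, b j⁆ * η ⁅b i, a j⁆)) = 0 := by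
      exact Finset.sum_eq_zero fun p _ => by rw [← Finset.mul_sum, hSD ζ η Z (b p), mul_zero]
    have ES3 : ∑ i, ∑ j, (ζ (a j) * (η ⁅Z, ⁅b j, a i⁆⁆ * ξ (b i) + η ⁅Z, a i⁆ * ξ ⁅b j, b i⁆ + η ⁅Z, ⁅b j, b i⁆⁆ * ξ (a i) + η ⁅Z, b i⁆ * ξ ⁅b j, a i⁆)) = 0 := by
      rw [Finset.sum_comm]
      exact Finset.sum_eq_zero fun p _ => by rw [← Finset.mul_sum, hSD η ξ Z (b p), mul_zero]
    have ES3s : ∑ i, ∑ j, (ζ (a i) * (η ⁅Z, ⁅b i, a j⁆⁆ * ξ (b j) + η ⁅Z, a j⁆ * ξ ⁅b i, b j⁆ + η ⁅Z, ⁅b i, b j⁆⁆ * ξ (a j) + η ⁅Z, b j⁆ * ξ ⁅b i, a j⁆)) = 0 := by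
      exact Finset.sum_eq_zero fun p _ => by rw [← Finset.mul_sum, hSD η ξ Z (b p), mul_zero]
    have ES4 : ∑ i, ∑ j, (ξ (a j) * (η ⁅b j, ⁅Z, a i⁆⁆ * ζ (b i) + η ⁅b j, a i⁆ * ζ ⁅Z, b i⁆ + η ⁅b j, ⁅Z, b i⁆⁆ * ζ (a i) + η ⁅b j, b i⁆ * ζ ⁅Z, a i⁆)) = 0 := by
      rw [Finset.sum_comm]
      exact Finset.sum_eq_zero fun p _ => by rw [← Finset.mul_sum, hSD η ζ (b p) Z, mul_zero]
    have ES4s : ∑ i, ∑ j, (ξ (a i) * (η ⁅b i, ⁅Z, a j⁆⁆ * ζ (b j) + η ⁅b i, a j⁆ * ζ ⁅Z, b j⁆ + η ⁅b i, ⁅Z, b j⁆⁆ * ζ (a j) + η ⁅b i, b j⁆ * ζ ⁅Z, a j⁆)) = 0 := by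
      exact Finset.sum_eq_zero fun p _ => by rw [← Finset.mul_sum, hSD η ζ (b p) Z, mul_zero]
    have ES5 : ∑ i, ∑ j, (ξ (a j) * (ζ ⁅b j, ⁅Z, a i⁆⁆ * η (b i) + ζ ⁅b j, a i⁆ * η ⁅Z, b i⁆ + ζ ⁅b j, ⁅Z, b i⁆⁆ * η (a i) + ζ ⁅b j, b i⁆ * η ⁅Z, a i⁆)) = 0 := by
      rw [Finset.sum_comm]
      exact Finset.sum_eq_zero fun p _ => by rw [← Finset.mul_sum, hSD ζ η (b p) Z, mul_zero]
    have ES5s : ∑ i, ∑ j, (ξ (a i) * (ζ ⁅b i, ⁅Z, a j⁆⁆ * η (b j) + ζ ⁅b i, a j⁆ * η ⁅Z, b j⁆ + ζ ⁅b i, ⁅Z, b j⁆⁆ * η (a j) + ζ ⁅b i, b j⁆ * η ⁅Z, a j⁆)) = 0 := by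
      exact Finset.sum_eq_zero fun p _ => by rw [← Finset.mul_sum, hSD ζ η (b p) Z, mul_zero]
    have ES6 : ∑ i, ∑ j, (ζ (a j) * (ξ ⁅b j, ⁅Z, a i⁆⁆ * η (b i) + ξ ⁅b j, a i⁆ * η ⁅Z, b i⁆ + ξ ⁅b j, ⁅Z, b i⁆⁆ * η (a i) + ξ ⁅b j, b i⁆ * η ⁅Z, a i⁆)) = 0 := by
      rw [Finset.sum_comm]
      exact Finset.sum_eq_zero fun p _ => by rw [← Finset.mul_sum, hSD ξ η (b p) Z, mul_zero]
    have ES6s : ∑ i, ∑ j, (ζ (a i) * (ξ ⁅b i, ⁅Z, a j⁆⁆ * η (b j) + ξ ⁅b i, a j⁆ * η ⁅Z, b j⁆ + ξ ⁅b i, ⁅Z, b j⁆⁆ * η (a j) + ξ ⁅b i, b j⁆ * η ⁅Z, a j⁆)) = 0 := by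
      exact Finset.sum_eq_zero fun p _ => by rw [← Finset.mul_sum, hSD ξ η (b p) Z, mul_zero]
    have ES7 : ∑ i, ∑ j, (ξ (b j) * (η ⁅Z, ⁅a j, a i⁆⁆ * ζ (b i) + η ⁅Z, a i⁆ * ζ ⁅a j, b i⁆ + η ⁅Z, ⁅a j, b i⁆⁆ * ζ (a i) + η ⁅Z, b i⁆ * ζ ⁅a j, a i⁆)) = 0 := by
      rw [Finset.sum_comm]
      exact Finset.sum_eq_zero fun p _ => by rw [← Finset.mul_sum, hSD η ζ Z (a p), mul_zero]
    have ES7s : ∑ i, ∑ j, (ξ (b i) * (η ⁅Z, ⁅a i, a j⁆⁆ * ζ (b j) + η ⁅Z, a j⁆ * ζ ⁅a i, b j⁆ + η ⁅Z, ⁅a i, b j⁆⁆ * ζ (a j) + η ⁅Z, b j⁆ * ζ ⁅a i, a j⁆)) = 0 := by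
      exact Finset.sum_eq_zero fun p _ => by rw [← Finset.mul_sum, hSD η ζ Z (a p), mul_zero]
    have ES8 : ∑ i, ∑ j, (η (b j) * (ξ ⁅Z, ⁅a j, a i⁆⁆ * ζ (b i) + ξ ⁅Z, a i⁆ * ζ ⁅a j, b i⁆ + ξ ⁅Z, ⁅a j, b i⁆⁆ * ζ (a i) + ξ ⁅Z, b i⁆ * ζ ⁅a j, a i⁆)) = 0 := by
      rw [Finset.sum_comm]
      exact Finset.sum_eq_zero fun p _ => by rw [← Finset.mul_sum, hSD ξ ζ Z (a p), mul_zero]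
    have ES8s : ∑ i, ∑ j, (η (b i) * (ξ ⁅Z, ⁅a i, a j⁆⁆ * ζ (b j) + ξ ⁅Z, a j⁆ * ζ ⁅a i, b j⁆ + ξ ⁅Z, ⁅a i, b j⁆⁆ * ζ (a j) + ξ ⁅Z, b j⁆ * ζ ⁅a i, a j⁆)) = 0 := by
      exact Finset.sum_eq_zero fun p _ => by rw [← Finset.mul_sum, hSD ξ ζ Z (a p), mul_zero]
    have ES9 : ∑ i, ∑ j, (ξ (b j) * (ζ ⁅a j, ⁅Z, a i⁆⁆ * η (b i) + ζ ⁅a j, a i⁆ * η ⁅Z, b i⁆ + ζ ⁅a j, ⁅Z, b i⁆⁆ * η (a i) + ζ ⁅a j, b i⁆ * η ⁅Z, a i⁆)) = 0 := by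
      rw [Finset.sum_comm]
      exact Finset.sum_eq_zero fun p _ => by rw [← Finset.mul_sum, hSD ζ η (a p) Z, mul_zero]
    have ES9s : ∑ i, ∑ j, (ξ (b i) * (ζ ⁅a i, ⁅Z, a j⁆⁆ * η (b j) + ζ ⁅a i, a j⁆ * η ⁅Z, b j⁆ + ζ ⁅a i, ⁅Z, b j⁆⁆ * η (a j) + ζ ⁅a i, b j⁆ * η ⁅Z, a j⁆)) = 0 := by
      exact Finset.sum_eq_zero fun p _ => by rw [← Finset.mul_sum, hSD ζ η (a p) Z, mul_zero]
    have ES10 : ∑ i, ∑ j, (η (b j) * (ζ ⁅a j, ⁅Z, a i⁆⁆ * ξ (b i) + ζ ⁅a j, a i⁆ * ξ ⁅Z, b i⁆ + ζ ⁅a j, ⁅Z, b i⁆⁆ * ξ (a i) + ζ ⁅a j, b i⁆ * ξ ⁅Z, a i⁆)) = 0 := by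
      rw [Finset.sum_comm]
      exact Finset.sum_eq_zero fun p _ => by rw [← Finset.mul_sum, hSD ζ ξ (a p) Z, mul_zero]
    have ES10s : ∑ i, ∑ j, (η (b i) * (ζ ⁅a i, ⁅Z, a j⁆⁆ * ξ (b j) + ζ ⁅a i, a j⁆ * ξ ⁅Z, b j⁆ + ζ ⁅a i, ⁅Z, b j⁆⁆ * ξ (a j) + ζ ⁅a i, b j⁆ * ξ ⁅Z, a j⁆)) = 0 := by
      exact Finset.sum_eq_zero fun p _ => by rw [← Finset.mul_sum, hSD ζ ξ (a p) Z, mul_zero]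
    have key : ∀ i j : Fin m,
        ((ξ (a i) * (η (a j) * ζ ⁅⁅Z, b i⁆, b j⁆) + ξ (a i) * (ζ (b j) * η ⁅⁅Z, b i⁆, a j⁆) + η (a j) * (ζ ⁅b i, b j⁆ * ξ ⁅Z, a i⁆) + ζ (b j) * (η ⁅b i, a j⁆ * ξ ⁅Z, a i⁆) + (η (a i) * (ζ (a j) * ξ ⁅⁅Z, b i⁆, b j⁆) + η (a i) * (ξ (b j) * ζ ⁅⁅Z, b i⁆, a j⁆) + ζ (a j) * (ξ ⁅b i, b j⁆ * η ⁅Z, a i⁆) + ξ (b j) * (ζ ⁅b i, a j⁆ * η ⁅Z, a i⁆)) + (ζ (a i) * (ξ (a j) * η ⁅⁅Z, b i⁆, b j⁆) + ζ (a i) * (η (b j) * ξ ⁅⁅Z, b i⁆, a j⁆) + ξ (a j) * (η ⁅b i, b j⁆ * ζ ⁅Z, a i⁆) + η (b j) * (ξ ⁅b i, a j⁆ * ζ ⁅Z, a i⁆))) + (ξ (a j) * (η (a i) * ζ ⁅⁅Z, b j⁆, b i⁆) + ξ (a j) * (ζ (b i) * η ⁅⁅Z, b j⁆, a i⁆) +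 η (a i) * (ζ ⁅b j, b i⁆ * ξ ⁅Z, a j⁆) + ζ (b i) * (η ⁅b j, a i⁆ * ξ ⁅Z, a j⁆) + (η (a j) * (ζ (a i) * ξ ⁅⁅Z, b j⁆, b i⁆) + η (a j) * (ξ (b i) * ζ ⁅⁅Z, b j⁆, a i⁆) + ζ (a i) * (ξ ⁅b j, b i⁆ * η ⁅Z, a j⁆) + ξ (b i) * (ζ ⁅b j, a i⁆ * η ⁅Z, a j⁆)) + (ζ (a j) * (ξ (a i) * η ⁅⁅Z, b j⁆, b i⁆) + ζ (a j) * (η (b i) * ξ ⁅⁅Z, b j⁆, a i⁆) + ξ (a i) * (η ⁅b j, b i⁆ * ζ ⁅Z, a j⁆) + η (b i) * (ξ ⁅b j, a i⁆ * ζ ⁅Z, a j⁆))))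
          = (ξ ⁅Z, ⁅a i, a j⁆⁆ * (η (b i) * ζ (b j)) + ξ ⁅Z, a i⁆ * (η ⁅b i, a j⁆ * ζ (b j)) + ξ ⁅Z, a i⁆ * (η (a j) * ζ ⁅b i, b j⁆)) + (ξ ⁅Z, ⁅a j, a i⁆⁆ * (η (b j) * ζ (b i)) + ξ ⁅Z, a j⁆ * (η ⁅b j, a i⁆ * ζ (b i)) + ξ ⁅Z, a j⁆ * (η (a i) * ζ ⁅b j, b i⁆)) + (η ⁅Z, ⁅a i, a j⁆⁆ * (ζ (b i) * ξ (b j)) + η ⁅Z, a i⁆ * (ζ ⁅b i, a j⁆ * ξ (b j)) + η ⁅Z, a i⁆ * (ζ (a j) * ξ ⁅b i, b j⁆)) + (η ⁅Z, ⁅a j, a i⁆⁆ * (ζ (b j) * ξ (b i)) + η ⁅Z, a j⁆ * (ζ ⁅b j, a i⁆ * ξ (b i)) + η ⁅Z, a j⁆ * (ζ (a i) * ξ ⁅b j, b i⁆)) + (ζ ⁅Z, ⁅a i, a j⁆⁆ * (ξ (b i) * η (b j)) + ζ ⁅Z, a i⁆ * (ξ ⁅b i, a j⁆ * η (b j)) +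 ζ ⁅Z, a i⁆ * (ξ (a j) * η ⁅b i, b j⁆)) + (ζ ⁅Z, ⁅a j, a i⁆⁆ * (ξ (b j) * η (b i)) + ζ ⁅Z, a j⁆ * (ξ ⁅b j, a i⁆ * η (b i)) + ζ ⁅Z, a j⁆ * (ξ (a i) * η ⁅b j, b i⁆)) + (ξ (a j) * (η ⁅Z, ⁅b j, a i⁆⁆ * ζ (b i) + η ⁅Z, a i⁆ * ζ ⁅b j, b i⁆ + η ⁅Z, ⁅b j, b i⁆⁆ * ζ (a i) + η ⁅Z, b i⁆ * ζ ⁅b j, a i⁆)) + (ξ (a i) * (η ⁅Z, ⁅b i, a j⁆⁆ * ζ (b j) + η ⁅Z, a j⁆ * ζ ⁅b i, b j⁆ + η ⁅Z, ⁅b i, b j⁆⁆ * ζ (a j) + η ⁅Z, b j⁆ * ζ ⁅b i, a j⁆)) + (ξ (a j) * (ζ ⁅Z, ⁅b j, a i⁆⁆ * η (b i) + ζ ⁅Z, a i⁆ * η ⁅b j, b i⁆ + ζ ⁅Z, ⁅b j, b i⁆⁆ * η (a i) + ζ ⁅Z, b i⁆ * η ⁅b j, a i⁆)) + (ξ (a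 i) * (ζ ⁅Z, ⁅b i, a j⁆⁆ * η (b j) + ζ ⁅Z, a j⁆ * η ⁅b i, b j⁆ + ζ ⁅Z, ⁅b i, b j⁆⁆ * η (a j) + ζ ⁅Z, b j⁆ * η ⁅b i, a j⁆)) + (ζ (a j) * (η ⁅Z, ⁅b j, a i⁆⁆ * ξ (b i) + η ⁅Z, a i⁆ * ξ ⁅b j, b i⁆ + η ⁅Z, ⁅b j, b i⁆⁆ * ξ (a i) + η ⁅Z, b i⁆ * ξ ⁅b j, a i⁆)) + (ζ (a i) * (η ⁅Z, ⁅b i, a j⁆⁆ * ξ (b j) + η ⁅Z, a j⁆ * ξ ⁅b i, b j⁆ + η ⁅Z, ⁅b i, b j⁆⁆ * ξ (a j) + η ⁅Z, b j⁆ * ξ ⁅b i, a j⁆)) - (ξ (a j) * (η ⁅b j, ⁅Z, a i⁆⁆ * ζ (b i) + η ⁅b j, a i⁆ * ζ ⁅Z, b i⁆ + η ⁅b j, ⁅Z, b i⁆⁆ * ζ (a i) + η ⁅b j, b i⁆ * ζ ⁅Z, a i⁆)) - (ξ (a i) * (η ⁅b i, ⁅Z, a j⁆⁆ * ζ (b j)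 + η ⁅b i, a j⁆ * ζ ⁅Z, b j⁆ + η ⁅b i, ⁅Z, b j⁆⁆ * ζ (a j) + η ⁅b i, b j⁆ * ζ ⁅Z, a j⁆)) - (ξ (a j) * (ζ ⁅b j, ⁅Z, a i⁆⁆ * η (b i) + ζ ⁅b j, a i⁆ * η ⁅Z, b i⁆ + ζ ⁅b j, ⁅Z, b i⁆⁆ * η (a i) + ζ ⁅b j, b i⁆ * η ⁅Z, a i⁆)) - (ξ (a i) * (ζ ⁅b i, ⁅Z, a j⁆⁆ * η (b j) + ζ ⁅b i, a j⁆ * η ⁅Z, b j⁆ + ζ ⁅b i, ⁅Z, b j⁆⁆ * η (a j) + ζ ⁅b i, b j⁆ * η ⁅Z, a j⁆)) - (ζ (a j) * (ξ ⁅b j, ⁅Z, a i⁆⁆ * η (b i) + ξ ⁅b j, a i⁆ * η ⁅Z, b i⁆ + ξ ⁅b j, ⁅Z, b i⁆⁆ * η (a i) + ξ ⁅b j, b i⁆ * η ⁅Z, a i⁆)) - (ζ (a i) * (ξ ⁅b i, ⁅Z, a j⁆⁆ * η (b j) + ξ ⁅b i, a j⁆ * η ⁅Z, b j⁆ + ξ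 ⁅b i, ⁅Z, b j⁆⁆ * η (a j) + ξ ⁅b i, b j⁆ * η ⁅Z, a j⁆)) + (ξ (b j) * (η ⁅Z, ⁅a j, a i⁆⁆ * ζ (b i) + η ⁅Z, a i⁆ * ζ ⁅a j, b i⁆ + η ⁅Z, ⁅a j, b i⁆⁆ * ζ (a i) + η ⁅Z, b i⁆ * ζ ⁅a j, a i⁆)) + (ξ (b i) * (η ⁅Z, ⁅a i, a j⁆⁆ * ζ (b j) + η ⁅Z, a j⁆ * ζ ⁅a i, b j⁆ + η ⁅Z, ⁅a i, b j⁆⁆ * ζ (a j) + η ⁅Z, b j⁆ * ζ ⁅a i, a j⁆)) - (η (b j) * (ξ ⁅Z, ⁅a j, a i⁆⁆ * ζ (b i) + ξ ⁅Z, a i⁆ * ζ ⁅a j, b i⁆ + ξ ⁅Z, ⁅a j, b i⁆⁆ * ζ (a i) + ξ ⁅Z, b i⁆ * ζ ⁅a j, a i⁆)) - (η (b i) * (ξ ⁅Z, ⁅a i, a j⁆⁆ * ζ (b j) + ξ ⁅Z, a j⁆ * ζ ⁅a i, b j⁆ + ξ ⁅Z, ⁅a i, b j⁆⁆ * ζ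 (a j) + ξ ⁅Z, b j⁆ * ζ ⁅a i, a j⁆)) - (ξ (b j) * (ζ ⁅a j, ⁅Z, a i⁆⁆ * η (b i) + ζ ⁅a j, a i⁆ * η ⁅Z, b i⁆ + ζ ⁅a j, ⁅Z, b i⁆⁆ * η (a i) + ζ ⁅a j, b i⁆ * η ⁅Z, a i⁆)) - (ξ (b i) * (ζ ⁅a i, ⁅Z, a j⁆⁆ * η (b j) + ζ ⁅a i, a j⁆ * η ⁅Z, b j⁆ + ζ ⁅a i, ⁅Z, b j⁆⁆ * η (a j) + ζ ⁅a i, b j⁆ * η ⁅Z, a j⁆)) + (η (b j) * (ζ ⁅a j, ⁅Z, a i⁆⁆ * ξ (b i) + ζ ⁅a j, a i⁆ * ξ ⁅Z, b i⁆ + ζ ⁅a j, ⁅Z, b i⁆⁆ * ξ (a i) + ζ ⁅a j, b i⁆ * ξ ⁅Z, a i⁆)) + (η (b i) * (ζ ⁅a i, ⁅Z, a j⁆⁆ * ξ (b j) + ζ ⁅a i, a j⁆ * ξ ⁅Z, b j⁆ + ζ ⁅a i, ⁅Z, b j⁆⁆ * ξ (a j) + ζ ⁅a i, b j⁆ * ξ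 ⁅Z, a j⁆)) := by
      intro i j
      simp only [zl, lie_lie, lie_neg, neg_lie, sub_lie, lie_sub, map_neg, map_sub,
        map_add, mul_neg, neg_mul, neg_neg, neg_sub]
      ring
    have main : ∑ i, ∑ j,
        ((ξ (a i) * (η (a j) * ζ ⁅⁅Z, b i⁆, b j⁆) + ξ (a i) * (ζ (b j) * η ⁅⁅Z, b i⁆, a j⁆) + η (a j) * (ζ ⁅b i, b j⁆ * ξ ⁅Z, a i⁆) + ζ (b j) * (η ⁅b i, a j⁆ * ξ ⁅Z, a i⁆) + (η (a i) * (ζ (a j) * ξ ⁅⁅Z, b i⁆, b j⁆) + η (a i) * (ξ (b j) * ζ ⁅⁅Z, b i⁆, a j⁆) + ζ (a j) * (ξ ⁅b i, b j⁆ * η ⁅Z, a i⁆) + ξ (b j) * (ζ ⁅b i, a j⁆ * η ⁅Z, a i⁆)) + (ζ (a i) * (ξ (a j) * η ⁅⁅Z, b i⁆, b j⁆) + ζ (a i) * (η (b j) * ξ ⁅⁅Z, b i⁆, a j⁆) + ξ (a j) * (η ⁅b i, b j⁆ * ζ ⁅Z, a i⁆) + η (b j) * (ξ ⁅b i, a j⁆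 * ζ ⁅Z, a i⁆))) + (ξ (a j) * (η (a i) * ζ ⁅⁅Z, b j⁆, b i⁆) + ξ (a j) * (ζ (b i) * η ⁅⁅Z, b j⁆, a i⁆) + η (a i) * (ζ ⁅b j, b i⁆ * ξ ⁅Z, a j⁆) + ζ (b i) * (η ⁅b j, a i⁆ * ξ ⁅Z, a j⁆) + (η (a j) * (ζ (a i) * ξ ⁅⁅Z, b j⁆, b i⁆) + η (a j) * (ξ (b i) * ζ ⁅⁅Z, b j⁆, a i⁆) + ζ (a i) * (ξ ⁅b j, b i⁆ * η ⁅Z, a j⁆) + ξ (b i) * (ζ ⁅b j, a i⁆ * η ⁅Z, a j⁆)) + (ζ (a j) * (ξ (a i) * η ⁅⁅Z, b j⁆, b i⁆) + ζ (a j) * (η (b i) * ξ ⁅⁅Z, b j⁆, a i⁆) + ξ (a i) * (η ⁅b j, b i⁆ * ζ ⁅Z, a j⁆) + η (b i) * (ξ ⁅b j, a i⁆ * ζ ⁅Z, a j⁆)))) = 0 := by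
      rw [Finset.sum_congr rfl fun i _ => Finset.sum_congr rfl fun j _ => key i j]
      simp only [Finset.sum_add_distrib, Finset.sum_sub_distrib] at EC1 EC1s EC2 EC2s EC3 EC3s ⊢
      linear_combination EC1 + EC1s + EC2 + EC2s + EC3 + EC3s + ES1 + ES1s + ES2 + ES2s + ES3 + ES3s - ES4 - ES4s - ES5 - ES5s - ES6 - ES6s + ES7 + ES7s - ES8 - ES8s - ES9 - ES9s + ES10 + ES10s
    have h1 : (∑ i, ∑ j, (ξ (a i) * (η (a j) * ζ ⁅⁅Z, b i⁆, b j⁆) + ξ (a i) * (ζ (b j) * η ⁅⁅Z, b i⁆, a j⁆) + η (a j) * (ζ ⁅b i, b j⁆ * ξ ⁅Z, a i⁆) + ζ (b j) * (η ⁅b i, a j⁆ * ξ ⁅Z, a i⁆) + (η (a i) * (ζ (a j) * ξ ⁅⁅Z, b i⁆, b j⁆) + η (a i) * (ξ (b j) * ζ ⁅⁅Z, b i⁆, a j⁆) + ζ (a j) * (ξ ⁅b i, b j⁆ * η ⁅Z, a i⁆) + ξ (b j) * (ζ ⁅b i, a j⁆ * η ⁅Z, a i⁆)) + (ζ (a i)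 * (ξ (a j) * η ⁅⁅Z, b i⁆, b j⁆) + ζ (a i) * (η (b j) * ξ ⁅⁅Z, b i⁆, a j⁆) + ξ (a j) * (η ⁅b i, b j⁆ * ζ ⁅Z, a i⁆) + η (b j) * (ξ ⁅b i, a j⁆ * ζ ⁅Z, a i⁆))))
        = ∑ i, ∑ j, (ξ (a j) * (η (a i) * ζ ⁅⁅Z, b j⁆, b i⁆) + ξ (a j) * (ζ (b i) * η ⁅⁅Z, b j⁆, a i⁆) + η (a i) * (ζ ⁅b j, b i⁆ * ξ ⁅Z, a j⁆) + ζ (b i) * (η ⁅b j, a i⁆ * ξ ⁅Z, a j⁆) + (η (a j) * (ζ (a i) * ξ ⁅⁅Z, b j⁆, b i⁆) + η (a j) * (ξ (b i) * ζ ⁅⁅Z, b j⁆, a i⁆) + ζ (a i) * (ξ ⁅b j, b i⁆ * η ⁅Z, a j⁆) + ξ (b i) * (ζ ⁅b j, a i⁆ * η ⁅Z, a j⁆)) + (ζ (a j) * (ξ (a i) * η ⁅⁅Z, b j⁆, b i⁆) + ζ (a j) * (η (b i) * ξ ⁅⁅Z, b j⁆, a i⁆) + ξ (a i) * (η ⁅b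 j, b i⁆ * ζ ⁅Z, a j⁆) + η (b i) * (ξ ⁅b j, a i⁆ * ζ ⁅Z, a j⁆))) := Finset.sum_comm
    have two : ∑ i, ∑ j,
        ((ξ (a i) * (η (a j) * ζ ⁅⁅Z, b i⁆, b j⁆) + ξ (a i) * (ζ (b j) * η ⁅⁅Z, b i⁆, a j⁆) + η (a j) * (ζ ⁅b i, b j⁆ * ξ ⁅Z, a i⁆) + ζ (b j) * (η ⁅b i, a j⁆ * ξ ⁅Z, a i⁆) + (η (a i) * (ζ (a j) * ξ ⁅⁅Z, b i⁆, b j⁆) + η (a i) * (ξ (b j) * ζ ⁅⁅Z, b i⁆, a j⁆) + ζ (a j) * (ξ ⁅b i, b j⁆ * η ⁅Z, a i⁆) + ξ (b j) * (ζ ⁅b i, a j⁆ * η ⁅Z, a i⁆)) + (ζ (a i) * (ξ (a j) * η ⁅⁅Z, b i⁆, b j⁆) + ζ (a i) * (η (b j) * ξ ⁅⁅Z, b i⁆, a j⁆) + ξ (a j) * (η ⁅b i, b j⁆ * ζ ⁅Z, a i⁆) + η (b j) * (ξ ⁅b i, a j⁆ * ζ ⁅Z, a i⁆))) + (ξ (a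 j) * (η (a i) * ζ ⁅⁅Z, b j⁆, b i⁆) + ξ (a j) * (ζ (b i) * η ⁅⁅Z, b j⁆, a i⁆) + η (a i) * (ζ ⁅b j, b i⁆ * ξ ⁅Z, a j⁆) + ζ (b i) * (η ⁅b j, a i⁆ * ξ ⁅Z, a j⁆) + (η (a j) * (ζ (a i) * ξ ⁅⁅Z, b j⁆, b i⁆) + η (a j) * (ξ (b i) * ζ ⁅⁅Z, b j⁆, a i⁆) + ζ (a i) * (ξ ⁅b j, b i⁆ * η ⁅Z, a j⁆) + ξ (b i) * (ζ ⁅b j, a i⁆ * η ⁅Z, a j⁆)) + (ζ (a j) * (ξ (a i) * η ⁅⁅Z, b j⁆, b i⁆) + ζ (a j) * (η (b i) * ξ ⁅⁅Z, b j⁆, a i⁆) + ξ (a i) * (η ⁅b j, b i⁆ * ζ ⁅Z, a j⁆) + η (b i) * (ξ ⁅b j, a i⁆ * ζ ⁅Z, a j⁆)))) = (∑ i, ∑ j, (ξ (a i) * (η (a j) * ζ ⁅⁅Z, b i⁆, b j⁆) + ξ (a i) * (ζ (b j) * η ⁅⁅Z, b i⁆, a j⁆) + η (a j) * (ζ ⁅b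 i, b j⁆ * ξ ⁅Z, a i⁆) + ζ (b j) * (η ⁅b i, a j⁆ * ξ ⁅Z, a i⁆) + (η (a i) * (ζ (a j) * ξ ⁅⁅Z, b i⁆, b j⁆) + η (a i) * (ξ (b j) * ζ ⁅⁅Z, b i⁆, a j⁆) + ζ (a j) * (ξ ⁅b i, b j⁆ * η ⁅Z, a i⁆) + ξ (b j) * (ζ ⁅b i, a j⁆ * η ⁅Z, a i⁆)) + (ζ (a i) * (ξ (a j) * η ⁅⁅Z, b i⁆, b j⁆) + ζ (a i) * (η (b j) * ξ ⁅⁅Z, b i⁆, a j⁆) + ξ (a j) * (η ⁅b i, b j⁆ * ζ ⁅Z, a i⁆) + η (b j) * (ξ ⁅b i, a j⁆ * ζ ⁅Z, a i⁆)))) + (∑ i, ∑ j, (ξ (a j) * (η (a i) * ζ ⁅⁅Z, b j⁆, b i⁆) + ξ (a j) * (ζ (b i) * η ⁅⁅Z, b j⁆, a i⁆) + η (a i) * (ζ ⁅b j, b i⁆ * ξ ⁅Z, a j⁆) + ζ (b i) * (η ⁅b j, a i⁆ * ξ ⁅Z, a j⁆) + (η (a j) * (ζ (a i) * ξ ⁅⁅Z,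 b j⁆, b i⁆) + η (a j) * (ξ (b i) * ζ ⁅⁅Z, b j⁆, a i⁆) + ζ (a i) * (ξ ⁅b j, b i⁆ * η ⁅Z, a j⁆) + ξ (b i) * (ζ ⁅b j, a i⁆ * η ⁅Z, a j⁆)) + (ζ (a j) * (ξ (a i) * η ⁅⁅Z, b j⁆, b i⁆) + ζ (a j) * (η (b i) * ξ ⁅⁅Z, b j⁆, a i⁆) + ξ (a i) * (η ⁅b j, b i⁆ * ζ ⁅Z, a j⁆) + η (b i) * (ξ ⁅b j, a i⁆ * ζ ⁅Z, a j⁆)))) :=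
      (Finset.sum_congr rfl fun i _ => Finset.sum_add_distrib).trans Finset.sum_add_distrib
    rw [two, ← h1] at main
    exact add_self_eq_zero.mp main
end
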